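/- Let d ≥ 2 with d ≡ 3 (mod 4) and let c be any integer. If p is a prime with p ≡ 1 (mod 4), then p ∉ S_{d,c}. -/

import Mathlib

open Equiv Function

namespace AuxSign

lemma signMul (n d : ℕ) [NeZero n] (hn4 : 4 ∣ n) (hd4 : d % 4 = 3)
    (hco : Nat.Coprime d n) :
    Equiv.Perm.sign (Units.mulLeft (ZMod.unitOfCoprime d hco)) = -1 := by
  have hnne : n ≠ 0 := NeZero.ne n
  obtain ⟨m, hn, hm2, hm0⟩ : ∃ m, n = 2 * m ∧ 2 ∣ m ∧ 0 < m := by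
    obtain ⟨k, hk⟩ := hn4
    exact ⟨2 * k, by omega, ⟨k, rfl⟩, by omega⟩
  haveI : NeZero m := ⟨by omega⟩
  have hmdvd : m ∣ n := ⟨2, by omega⟩
  have hcom : Nat.Coprime d m := Nat.Coprime.coprime_dvd_right hmdvd hco
  obtain ⟨e, hde⟩ : ∃ e, d = 2 * e + 1 := ⟨d / 2, by omega⟩
  -- the flip family
  set F : ZMod m → Perm (ZMod 2) :=
    (fun a => if m ≤ (d * a.val) % n then Equiv.swap 0 1 else 1) with hF
  set π : Perm (ZMod m × ZMod 2) :=
    (prodCongrLeft fun _ : ZMod 2 => Units.mulLeft (ZMod.unitOfCoprime d hcom)) *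
      (prodCongrRight F) with hπ
  -- the equivalence
  have hψbij : Function.Bijective
      (fun y : ZMod m × ZMod 2 => ((y.1.val + m * y.2.val : ℕ) : ZMod n)) := by
    rw [Fintype.bijective_iff_injective_and_card]
    constructor
    · rintro ⟨a, b⟩ ⟨a', b'⟩ h
      have ha : a.val < m := ZMod.val_lt a
      have ha' : a'.val < m := ZMod.val_lt a'
      have hb : b.val < 2 := ZMod.val_lt b
      have hb' : b'.val < 2 := ZMod.val_lt b'
      simp only at h
      have hb01 : b.val = 0 ∨ b.val = 1 := by omega
      have hb'01 : b'.val = 0 ∨ b'.val = 1 := by omega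
      have h2 : a.val + m * b.val = a'.val + m * b'.val := by
        have l1 : a.val + m * b.val < n := by
          rcases hb01 with h0 | h0 <;> rw [h0] <;> omega
        have l2 : a'.val + m * b'.val < n := by
          rcases hb'01 with h0 | h0 <;> rw [h0] <;> omega
        have e1 := ZMod.val_cast_of_lt (n := n) (a := a.val + m * b.val) l1
        have e2 := ZMod.val_cast_of_lt (n := n) (a := a'.val + m * b'.val) l2
        rw [← e1, ← e2, h]
      have hav : a.val = a'.val ∧ b.val = b'.val := by
        rcases hb01 with h0 | h0 <;> rcases hb'01 with h0' | h0' <;>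
          rw [h0, h0'] at h2 <;> omega
      exact Prod.ext (ZMod.val_injective m hav.1) (ZMod.val_injective 2 hav.2)
    · simp only [Fintype.card_prod, ZMod.card]; omega
  set ψ : (ZMod m × ZMod 2) ≃ ZMod n := Equiv.ofBijective _ hψbij with hψ
  -- a helper: (m : ZMod n) * x only depends on x mod 2
  have hswap : ∀ b : ZMod 2, Equiv.swap (0 : ZMod 2) 1 b = b + 1 := by decide
  have hmod2 : ∀ x y : ℕ, x % 2 = y % 2 →
      (m : ZMod n) * ((x : ℕ) : ZMod n) = (m : ZMod n) * ((y : ℕ) : ZMod n) := by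
    intro x y hxy
    have h1 : ∀ z : ℕ, (m : ZMod n) * ((z : ℕ) : ZMod n) = (m : ZMod n) * ((z % 2 : ℕ) : ZMod n) := by
      intro z
      conv_lhs => rw [← Nat.mod_add_div z 2]
      push_cast
      have : (m : ZMod n) * (2 * (z / 2 : ℕ)) = ((n : ℕ) : ZMod n) * (z / 2 : ℕ) := by
        rw [hn]; push_cast; ring
      rw [mul_add, this, ZMod.natCast_self, zero_mul, add_zero]
    rw [h1 x, h1 y, hxy]
  -- the key conjugation identity
  have key : ∀ y : ZMod m × ZMod 2,
      (Units.mulLeft (ZMod.unitOfCoprime d hco)) (ψ y) = ψ (π y) := by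
    rintro ⟨a, b⟩
    have hva : a.val < m := ZMod.val_lt a
    have hvb : b.val < 2 := ZMod.val_lt b
    set va := a.val with hva'
    set vb := b.val with hvb'
    set R := (d * va) % n with hR
    have hRn : R < n := Nat.mod_lt _ (by omega)
    have hQR : n * ((d * va) / n) + R = d * va := Nat.div_add_mod _ _
    -- first component value
    have hcomp1 : ((ZMod.unitOfCoprime d hcom : (ZMod m)ˣ) * a : ZMod m).val = R % m := by
      show ((ZMod.unitOfCoprime d hcom : ZMod m) * a).val = R % m
      rw [ZMod.coe_unitOfCoprime, ZMod.val_mul, ZMod.val_natCast]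
      conv_lhs => rw [Nat.mod_mul_mod]
      rw [hR, Nat.mod_mod_of_dvd _ hmdvd]
    -- R / m is the bit
    have hTbit : R / m = if m ≤ R then 1 else 0 := by
      split_ifs with h
      · exact Nat.div_eq_of_lt_le (by omega) (by omega)
      · exact Nat.div_eq_of_lt (by omega)
    -- (d : ZMod n) * m = m
    have hdm : (d : ZMod n) * ((m : ℕ) : ZMod n) = ((m : ℕ) : ZMod n) := by
      have h1 : d * m = e * n + m := by rw [hde, hn]; ring
      have h2 : ((d * m : ℕ) : ZMod n) = ((m : ℕ) : ZMod n) := by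
        rw [h1]; push_cast [ZMod.natCast_self]; ring
      push_cast at h2
      exact h2
    have hdva : ((d : ZMod n)) * ((va : ℕ) : ZMod n) = ((R : ℕ) : ZMod n) := by
      rw [← Nat.cast_mul, ← hQR]
      push_cast [ZMod.natCast_self]
      ring
    -- now the main computation
    show (ZMod.unitOfCoprime d hco : ZMod n) * ψ (a, b) = _
    rw [ZMod.coe_unitOfCoprime]
    have hπab : π (a, b) = ((ZMod.unitOfCoprime d hcom : (ZMod m)ˣ) * a, F a b) := rfl
    rw [hπab]
    show (d : ZMod n) * ((va + m * vb : ℕ) : ZMod n)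
        = ((((ZMod.unitOfCoprime d hcom : (ZMod m)ˣ) * a : ZMod m).val + m * (F a b).val : ℕ) : ZMod n)
    rw [hcomp1]
    have lhs_eq : (d : ZMod n) * ((va + m * vb : ℕ) : ZMod n)
        = ((R % m : ℕ) : ZMod n) + (m : ZMod n) * (((R / m) + vb : ℕ) : ZMod n) := by
      have step1 : (d : ZMod n) * ((va + m * vb : ℕ) : ZMod n)
          = (d : ZMod n) * ((va : ℕ) : ZMod n)
            + ((d : ZMod n) * ((m : ℕ) : ZMod n)) * ((vb : ℕ) : ZMod n) := by
        push_cast; ring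
      rw [step1, hdva, hdm]
      conv_lhs => rw [show (R : ℕ) = m * (R / m) + R % m from (Nat.div_add_mod R m).symm]
      push_cast
      ring
    rw [lhs_eq]
    have rhs_eq : ((R % m + m * (F a b).val : ℕ) : ZMod n)
        = ((R % m : ℕ) : ZMod n) + (m : ZMod n) * (((F a b).val : ℕ) : ZMod n) := by
      push_cast; ring
    rw [rhs_eq]
    congr 1
    apply hmod2
    -- (R / m + vb) % 2 = (F a b).val % 2
    by_cases hc : m ≤ R
    · have hT : R / m = 1 := by rw [hTbit, if_pos hc]
      have hFa : F a = Equiv.swap 0 1 := by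
        simp only [hF]
        rw [if_pos hc]
      rw [hT, hFa, hswap b]
      have : (b + 1).val = (vb + 1) % 2 := by
        rw [ZMod.val_add, ZMod.val_one]
      rw [this]
      omega
    · have hT : R / m = 0 := by rw [hTbit, if_neg hc]
      have hFa : F a = 1 := by
        simp only [hF]
        rw [if_neg hc]
      rw [hT, hFa]
      show (0 + vb) % 2 = (b).val % 2
      omega
  -- conjugation
  have hperm : (Units.mulLeft (ZMod.unitOfCoprime d hco) : Perm (ZMod n)) = ψ.permCongr π := by
    apply Equiv.ext
    intro x
    have hx : x = ψ (ψ.symm x) := (ψ.apply_symm_apply x).symm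
    conv_lhs => rw [hx]
    rw [key]
    rfl
  rw [hperm, Equiv.Perm.sign_permCongr, hπ, map_mul,
    Equiv.Perm.sign_prodCongrLeft, Equiv.Perm.sign_prodCongrRight]
  -- first factor is 1
  have hfac1 : (∏ _k : ZMod 2, Equiv.Perm.sign (Units.mulLeft (ZMod.unitOfCoprime d hcom))) = 1 := by
    rw [Finset.prod_const, Finset.card_univ, ZMod.card]
    exact Int.units_sq _
  rw [hfac1, one_mul]
  -- second factor
  have hsign : ∀ a : ZMod m, Equiv.Perm.sign (F a)
      = if m ≤ (d * a.val) % n then (-1 : ℤˣ) else 1 := by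
    intro a
    rw [hF]
    split_ifs with h
    · simp only [if_pos h]
      exact Equiv.Perm.sign_swap (by decide)
    · simp only [if_neg h]
      exact map_one _
  simp_rw [hsign]
  -- evaluate the product by the pairing a ↔ -a
  set G : ZMod m → ℤˣ := fun a => if m ≤ (d * a.val) % n then (-1 : ℤˣ) else 1 with hG
  set half : ZMod m := ((m / 2 : ℕ) : ZMod m) with hhalf
  have hhalfval : half.val = m / 2 := ZMod.val_cast_of_lt (by omega)
  have hhalfneg : -half = half := by
    have : half + half = 0 := by
      rw [hhalf, ← Nat.cast_add, show m / 2 + m / 2 = m by omega, ZMod.natCast_self]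
    exact neg_eq_of_add_eq_zero_left this
  have hGhalf : G half = -1 := by
    rw [hG]
    simp only [hhalfval]
    obtain ⟨t, ht⟩ : ∃ t, d = 4 * t + 3 := ⟨d / 4, by omega⟩
    obtain ⟨u, hu⟩ : ∃ u, m = 2 * u ∧ 0 < u := by
      obtain ⟨u, hu⟩ := hm2; exact ⟨u, hu, by omega⟩
    have h2 : m / 2 = u := by omega
    have h3 : d * (m / 2) = n * t + 3 * u := by
      rw [h2, ht, hn, hu.1]; ring
    have h4 : (d * (m / 2)) % n = 3 * u := by
      rw [h3, Nat.mul_add_mod, Nat.mod_eq_of_lt (by omega)]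
    rw [h4, if_pos (by omega)]
  have hG0 : G 0 = 1 := by
    rw [hG]
    simp only [ZMod.val_zero, Nat.mul_zero, Nat.zero_mod]
    rw [if_neg (by omega)]
  have hGneg : ∀ a : ZMod m, a ≠ 0 → G (-a) = G a := by
    intro a ha
    have hv0 : a.val ≠ 0 := fun h => ha ((ZMod.val_eq_zero a).mp h)
    have hvm : a.val < m := ZMod.val_lt a
    have hnegv : (-a).val = m - a.val := by rw [ZMod.neg_val, if_neg ha]
    set v := a.val with hv
    set r := (d * v) % n with hr
    set s := (d * (m - v)) % n with hs
    have hrn : r < n := Nat.mod_lt _ (by omega)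
    have hsn : s < n := Nat.mod_lt _ (by omega)
    have hdvd : ∀ w : ℕ, 0 < w → w < m → (d * w) % n ≠ 0 := by
      intro w hw0 hwm h
      have hdvd1 : n ∣ d * w := Nat.dvd_of_mod_eq_zero h
      have hdvd2 : n ∣ w := (Nat.Coprime.dvd_of_dvd_mul_left (hco.symm) hdvd1)
      have := Nat.le_of_dvd hw0 hdvd2
      omega
    have hr0 : r ≠ 0 := hdvd v (by omega) hvm
    have hs0 : s ≠ 0 := hdvd (m - v) (by omega) (by omega)
    have hdmm : d * m % n = m := by
      rw [show d * m = n * e + m by rw [hde, hn]; ring, Nat.mul_add_mod,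
        Nat.mod_eq_of_lt (by omega)]
    have hrm : ∀ w : ℕ, 0 < w → w < m → (d * w) % n ≠ m := by
      intro w hw0 hwm h
      have h1 : d * w ≡ d * m [MOD n] := by
        rw [Nat.ModEq]
        rw [h, hdmm]
      have h2 : w ≡ m [MOD n] := (Nat.ModEq.cancel_left_of_coprime (by rwa [Nat.coprime_comm] at hco) h1)
      have h3 : w % n = m % n := h2
      rw [Nat.mod_eq_of_lt (by omega), Nat.mod_eq_of_lt (by omega)] at h3
      omega
    have hr1 : r ≠ m := hrm v (by omega) hvm
    have hs1 : s ≠ m := hrm (m - v) (by omega) (by omega)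
    have hsum : (s + r) % n = m := by
      have h1 : s + r ≡ d * (m - v) + d * v [MOD n] :=
        Nat.ModEq.add (Nat.mod_modEq _ _) (Nat.mod_modEq _ _)
      have h2 : d * (m - v) + d * v = d * m := by
        rw [← Nat.mul_add, Nat.sub_add_cancel (by omega)]
      have h3 : (s + r) % n = (d * m) % n := by
        rw [← h2]; exact h1
      rw [h3, hdmm]
    have hq : s + r = m ∨ s + r = n + m := by
      have h1 := Nat.div_add_mod (s + r) n
      rw [hsum] at h1
      have h2 : (s + r) / n < 2 := Nat.div_lt_of_lt_mul (by omega)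
      interval_cases h : (s + r) / n <;> omega
    show (if m ≤ (d * (-a).val) % n then (-1 : ℤˣ) else 1) = (if m ≤ (d * a.val) % n then (-1 : ℤˣ) else 1)
    rw [hnegv, ← hv, ← hr, ← hs]
    rcases hq with h | h
    · rw [if_neg (by omega), if_neg (by omega)]
    · rw [if_pos (by omega), if_pos (by omega)]
  -- now the product
  have hmem : half ∈ (Finset.univ : Finset (ZMod m)) := Finset.mem_univ _
  rw [← Finset.mul_prod_erase Finset.univ G hmem]
  have hrest : ∏ a ∈ Finset.univ.erase half, G a = 1 := by
    refine Finset.prod_involution (fun a _ => -a) ?_ ?_ ?_ ?_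
    · intro a _
      show G a * G (-a) = 1
      by_cases ha : a = 0
      · subst ha; rw [neg_zero, hG0]; rfl
      · rw [hGneg a ha]
        exact Int.units_mul_self _
    · intro a hamem haG
      intro hnegaa
      have hnegaa' : -a = a := hnegaa
      have h2a : a + a = 0 := by linear_combination -hnegaa'
      -- a = 0 or a = half
      have hval : (a + a).val = 0 := by rw [h2a]; exact ZMod.val_zero
      rw [ZMod.val_add] at hval
      have hdvd2 : m ∣ a.val + a.val := Nat.dvd_of_mod_eq_zero hval
      have hvm : a.val < m := ZMod.val_lt a
      obtain ⟨t, ht⟩ := hdvd2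
      have htlt : t < 2 := by
        by_contra hcon
        push_neg at hcon
        have := Nat.mul_le_mul_left m hcon
        omega
      interval_cases t
      · -- a.val = 0, a = 0
        have ha0 : a = 0 := (ZMod.val_eq_zero a).mp (by omega)
        rw [ha0, hG0] at haG
        exact haG rfl
      · -- a.val = m / 2 hence a = half
        have haval : a.val = m / 2 := by omega
        have : a = half := by
          rw [hhalf, ← haval, ZMod.natCast_val, ZMod.cast_id]
        rw [Finset.mem_erase] at hamem
        exact hamem.1 this
    · intro a hamem
      show -a ∈ Finset.univ.erase half
      rw [Finset.mem_erase] at hamem ⊢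
      refine ⟨?_, Finset.mem_univ _⟩
      intro hcon
      apply hamem.1
      have := congrArg Neg.neg hcon
      rw [neg_neg, hhalfneg] at this
      exact this
    · intro a _
      show - -a = a
      exact neg_neg a
  rw [hrest, mul_one, hGhalf]


lemma iterate_card_eq_self {α : Type*} [Fintype α] [DecidableEq α] (f : α → α)
    (hf : Function.Bijective f) (x : α)
    (h : Set.ncard (Set.range fun k : ℕ => f^[k] x) = Fintype.card α) :
    f^[Fintype.card α] x = x := by
  -- there exist i < j with equal iterates
  have hper : ∃ t, 0 < t ∧ t ≤ Fintype.card α ∧ Function.IsPeriodicPt f t x := by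
    obtain ⟨i, j, hij, heq⟩ := Fintype.exists_ne_map_eq_of_card_lt
      (fun i : Fin (Fintype.card α + 1) => f^[(i : ℕ)] x) (by simp)
    have key : ∀ i j : Fin (Fintype.card α + 1), (i : ℕ) < (j : ℕ) →
        f^[(i : ℕ)] x = f^[(j : ℕ)] x → ∃ t, 0 < t ∧ t ≤ Fintype.card α ∧
          Function.IsPeriodicPt f t x := by
      intro i j hlt he
      refine ⟨(j : ℕ) - (i : ℕ), by omega, by omega, ?_⟩
      have h1 : f^[(i : ℕ)] (f^[(j : ℕ) - (i : ℕ)] x) = f^[(i : ℕ)] x := by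
        rw [← Function.iterate_add_apply, Nat.add_sub_cancel' (le_of_lt hlt)]
        exact he.symm
      exact (hf.injective.iterate (i : ℕ)) h1
    rcases lt_or_gt_of_ne (fun hc : (i : ℕ) = (j : ℕ) => hij (Fin.ext hc)) with hlt | hlt
    · exact key i j hlt heq
    · exact key j i hlt heq.symm
  obtain ⟨t, ht0, htle, hper⟩ := hper
  have hm0pos : 0 < Function.minimalPeriod f x := hper.minimalPeriod_pos ht0
  have hm0le : Function.minimalPeriod f x ≤ Fintype.card α :=
    le_trans (hper.minimalPeriod_le ht0) htle
  have hsub : Set.range (fun k : ℕ => f^[k] x)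
      ⊆ (fun k : ℕ => f^[k] x) '' Set.Iio (Function.minimalPeriod f x) := by
    rintro _ ⟨k, rfl⟩
    exact ⟨k % Function.minimalPeriod f x, Nat.mod_lt _ hm0pos,
      Function.iterate_mod_minimalPeriod_eq⟩
  have hle : Fintype.card α ≤ Function.minimalPeriod f x := by
    calc Fintype.card α = Set.ncard (Set.range fun k : ℕ => f^[k] x) := h.symm
      _ ≤ Set.ncard ((fun k : ℕ => f^[k] x) '' Set.Iio (Function.minimalPeriod f x)) :=
          Set.ncard_le_ncard hsub ((Set.finite_Iio _).image _)
      _ ≤ Set.ncard (Set.Iio (Function.minimalPeriod f x)) :=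
          Set.ncard_image_le (Set.finite_Iio _)
      _ = Function.minimalPeriod f x := by
          rw [← Finset.coe_range, Set.ncard_coe_finset, Finset.card_range]
  have hm0 : Function.minimalPeriod f x = Fintype.card α := le_antisymm hm0le hle
  rw [← hm0]
  exact Function.iterate_minimalPeriod

theorem main (d : ℕ) (hd : 2 ≤ d) (hd4 : d % 4 = 3) (c : ℤ)
    (p : ℕ) (hp : p.Prime) (hp4 : p % 4 = 1) :
    ¬ (Function.Bijective (fun x : ZMod p => x ^ d + (c : ZMod p)) ∧
      ∀ x : ZMod p,
        Set.ncard (Set.range fun k : ℕ => (fun y : ZMod p => y ^ d + (c : ZMod p))^[k] x) = p) := by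
  rintro ⟨hbij, horb⟩
  haveI : Fact p.Prime := ⟨hp⟩
  have hp2 : 2 ≤ p := hp.two_le
  have hp5 : 5 ≤ p := by
    rcases Nat.lt_or_ge p 5 with h | h
    · interval_cases p <;> omega
    · exact h
  set f : ZMod p → ZMod p := fun x => x ^ d + (c : ZMod p) with hf
  have hcard : Fintype.card (ZMod p) = p := ZMod.card p
  have hfix : ∀ x : ZMod p, f^[p] x = x := by
    intro x
    have := iterate_card_eq_self f hbij x (by rw [hcard]; exact horb x)
    rwa [hcard] at this
  set e : Perm (ZMod p) := Equiv.ofBijective f hbij with he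
  have hep : e ^ p = 1 := by
    apply Equiv.ext
    intro x
    have : (⇑e)^[p] x = x := hfix x
    rwa [Equiv.Perm.iterate_eq_pow] at this
  have hodd : Odd p := hp.odd_of_ne_two (by omega)
  have hsigne : Equiv.Perm.sign e = 1 := by
    have h1 : (Equiv.Perm.sign e) ^ p = 1 := by rw [← map_pow, hep, map_one]
    rcases Int.units_eq_one_or (Equiv.Perm.sign e) with h | h
    · exact h
    · rw [h, hodd.neg_one_pow] at h1
      exact absurd h1 (by decide)
  -- the translation permutation
  set τ : Perm (ZMod p) := Equiv.addRight ((c : ZMod p)) with hτ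
  have hτpow : ∀ k : ℕ, τ ^ k = Equiv.addRight ((k : ZMod p) * (c : ZMod p)) := by
    intro k
    induction k with
    | zero => apply Equiv.ext; intro x; simp
    | succ k ih =>
        apply Equiv.ext; intro x
        rw [pow_succ]
        show (τ ^ k) (τ x) = _
        rw [ih]
        show (x + (c : ZMod p)) + (k : ZMod p) * c = x + ((k + 1 : ℕ) : ZMod p) * c
        push_cast
        ring
  have hτp : τ ^ p = 1 := by
    rw [hτpow p, ZMod.natCast_self, zero_mul]
    apply Equiv.ext; intro x; simp
  have hsignτ : Equiv.Perm.sign τ = 1 := by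
    have h1 : (Equiv.Perm.sign τ) ^ p = 1 := by rw [← map_pow, hτp, map_one]
    rcases Int.units_eq_one_or (Equiv.Perm.sign τ) with h | h
    · exact h
    · rw [h, hodd.neg_one_pow] at h1
      exact absurd h1 (by decide)
  -- the power permutation
  set sd : Perm (ZMod p) := e.trans τ.symm with hsddef
  have hsd : ∀ x : ZMod p, sd x = x ^ d := by
    intro x
    show τ.symm (e x) = x ^ d
    rw [Equiv.symm_apply_eq]
    rfl
  have hcompose : e = τ * sd := by
    apply Equiv.ext; intro x
    show e x = τ (sd x)
    rw [hsd]
    show e x = x ^ d + c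
    rfl
  have hsignsd : Equiv.Perm.sign sd = 1 := by
    have := hsigne
    rw [hcompose, map_mul, hsignτ, one_mul] at this
    exact this
  -- now derive the contradiction: sign sd = -1
  have hd0 : d ≠ 0 := by omega
  -- coprimality of d and p - 1
  obtain ⟨g, hg⟩ := IsCyclic.exists_generator (α := (ZMod p)ˣ)
  have horderg : orderOf g = p - 1 := by
    rw [orderOf_eq_card_of_forall_mem_zpowers hg, Nat.card_eq_fintype_card, ZMod.card_units]
  have hco : Nat.Coprime d (p - 1) := by
    by_contra hnc
    have hgcd1 : Nat.gcd d (p - 1) ≠ 1 := hnc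
    have hq : (Nat.gcd d (p - 1)).minFac.Prime := Nat.minFac_prime hgcd1
    haveI : Fact (Nat.gcd d (p - 1)).minFac.Prime := ⟨hq⟩
    have hqd : (Nat.gcd d (p - 1)).minFac ∣ d :=
      dvd_trans (Nat.minFac_dvd _) (Nat.gcd_dvd_left _ _)
    have hqn : (Nat.gcd d (p - 1)).minFac ∣ Fintype.card (ZMod p)ˣ := by
      rw [ZMod.card_units]
      exact dvd_trans (Nat.minFac_dvd _) (Nat.gcd_dvd_right _ _)
    obtain ⟨h, hh⟩ := exists_prime_orderOf_dvd_card (Nat.gcd d (p - 1)).minFac hqn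
    have hhd : h ^ d = 1 := orderOf_dvd_iff_pow_eq_one.mp (hh ▸ hqd)
    have hinj := sd.injective
    have hval : sd ((h : ZMod p)) = sd ((1 : (ZMod p)ˣ) : ZMod p) := by
      rw [hsd, hsd]
      push_cast
      rw [← Units.val_pow_eq_pow_val, hhd]
      simp
    have h1 : h = 1 := Units.ext (by simpa using hinj hval)
    rw [h1, orderOf_one] at hh
    exact hq.one_lt.ne' hh.symm
  -- the equivalence with ZMod (p - 1)
  haveI : NeZero (p - 1) := ⟨by omega⟩
  have hγbij : Function.Bijective (fun j : ZMod (p - 1) => g ^ (j.val)) := by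
    rw [Fintype.bijective_iff_injective_and_card]
    constructor
    · intro a b hab
      have h1 : a.val ≡ b.val [MOD orderOf g] := (pow_eq_pow_iff_modEq).mp hab
      rw [horderg] at h1
      have h2 : a.val % (p - 1) = b.val % (p - 1) := h1
      rw [Nat.mod_eq_of_lt (ZMod.val_lt a), Nat.mod_eq_of_lt (ZMod.val_lt b)] at h2
      exact ZMod.val_injective _ h2
    · rw [ZMod.card, ZMod.card_units]
  set γ : ZMod (p - 1) ≃ (ZMod p)ˣ := Equiv.ofBijective _ hγbij with hγ
  set β : ZMod (p - 1) ≃ {x : ZMod p // x ≠ 0} := γ.trans unitsEquivNeZero with hβ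
  -- the subtype permutation
  have hsub1 : ∀ x : ZMod p, x ≠ 0 ↔ sd x ≠ 0 := by
    intro x
    rw [hsd]
    rw [pow_ne_zero_iff hd0]
  set sdsub : Perm {x : ZMod p // x ≠ 0} := sd.subtypePerm (fun x => (hsub1 x).symm) with hsdsub
  have hsignsub : Equiv.Perm.sign sdsub = Equiv.Perm.sign sd := by
    apply Equiv.Perm.sign_subtypePerm
    intro x hx
    intro hx0
    apply hx
    rw [hx0, hsd, zero_pow hd0]
  -- conjugation identity
  have hconj : ∀ j : ZMod (p - 1),
      sdsub (β j) = β ((ZMod.unitOfCoprime d hco).mulLeft j) := by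
    intro j
    apply Subtype.ext
    show sd ((g ^ j.val : (ZMod p)ˣ) : ZMod p) = ((γ ((ZMod.unitOfCoprime d hco : ZMod (p-1)) * j) : (ZMod p)ˣ) : ZMod p)
    rw [hsd]
    have hγval : (γ ((ZMod.unitOfCoprime d hco : ZMod (p-1)) * j) : (ZMod p)ˣ)
        = g ^ (((ZMod.unitOfCoprime d hco : ZMod (p-1)) * j).val) := rfl
    rw [hγval]
    rw [← Units.val_pow_eq_pow_val, ← pow_mul]
    congr 1
    apply (pow_eq_pow_iff_modEq).mpr
    rw [horderg]
    rw [ZMod.coe_unitOfCoprime, ZMod.val_mul, ZMod.val_natCast]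
    calc j.val * d ≡ d * j.val [MOD p - 1] := by rw [Nat.mul_comm]
      _ ≡ (d % (p-1)) * j.val [MOD p - 1] := ((Nat.mod_modEq d (p-1)).symm).mul_right _
      _ ≡ (d % (p-1)) * j.val % (p-1) [MOD p - 1] := (Nat.mod_modEq _ _).symm
  have hpermeq : sdsub = β.permCongr ((ZMod.unitOfCoprime d hco).mulLeft) := by
    apply Equiv.ext
    intro x
    conv_lhs => rw [show x = β (β.symm x) from (β.apply_symm_apply x).symm]
    rw [hconj]
    rfl
  have hfinal : Equiv.Perm.sign sd = -1 := by
    rw [← hsignsub, hpermeq, Equiv.Perm.sign_permCongr]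
    exact signMul (p - 1) d ⟨(p-1)/4, by omega⟩ hd4 hco
  rw [hsignsd] at hfinal
  exact absurd hfinal (by decide)

end AuxSign

/-- The map induced by `φ(x) = x^d + c` on `ℤ/pℤ` is a permutation consisting of a
single cycle of length `p`: it is a bijection and the orbit of every element has
exactly `p` elements. -/
def SinglePCycle (d : ℕ) (c : ℤ) (p : ℕ) : Prop :=
  Function.Bijective (fun x : ZMod p => x ^ d + (c : ZMod p)) ∧
  ∀ x : ZMod p,
    Set.ncard (Set.range fun k : ℕ => (fun y : ZMod p => y ^ d + (c : ZMod p))^[k] x) = p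

/-- `S_{d,c}`: the set of primes `p` for which `x ↦ x^d + c` is a single `p`-cycle on `ℤ/pℤ`. -/
def Scycle (d : ℕ) (c : ℤ) : Set ℕ := {p | p.Prime ∧ SinglePCycle d c p}

theorem not_mem_S_of_three_mod_four (d : ℕ) (hd : 2 ≤ d) (hd4 : d % 4 = 3) (c : ℤ)
    (p : ℕ) (hp : p.Prime) (hp4 : p % 4 = 1) : p ∉ Scycle d c := by
  intro hmem
  exact AuxSign.main d hd hd4 c p hp hp4 hmem.2
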